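/- Let ζ > 0 and let Λ be a stochastic process on a probability space (Ω, P) with almost surely nondecreasing paths and Λ(0) = 0, satisfying condition (DIFF) with exponent ζ. Then for every ε > 0 there exist a finite constant C and a threshold a₀ ≥ 1 such that for all real T ≥ 2 and all a with a₀ ≤ a ≤ T: P( there exist reals s, s' with 0 ≤ s ≤ s' ≤ T, s' − s ≥ a, and |Λ(s') − Λ(s) − (s' − s)| > (s' − s)^{1/2 + ε} ) ≤ C · T² · a^{−ζ}. -/

import Mathlib

open MeasureTheory Filter

/-- Auxiliary: for `0 < k`, `0 < β < α`, `k * x^α - x^β → ∞` as `x → ∞`. -/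
lemma aux_rpow_tendsto (k α β : ℝ) (hk : 0 < k) (hβ : 0 < β) (hαβ : β < α) :
    Tendsto (fun x : ℝ => k * x ^ α - x ^ β) atTop atTop := by
  have h1 : Tendsto (fun x : ℝ => x ^ β) atTop atTop := tendsto_rpow_atTop hβ
  have h2 : Tendsto (fun x : ℝ => k * x ^ (α - β) + (-1)) atTop atTop :=
    tendsto_atTop_add_const_right _ _
      (((tendsto_rpow_atTop (by linarith : (0:ℝ) < α - β)).const_mul_atTop hk))
  have h3 := h1.atTop_mul_atTop₀ h2
  refine h3.congr' ?_
  filter_upwards [eventually_gt_atTop (0:ℝ)] with x hx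
  have hxa : x ^ β * x ^ (α - β) = x ^ α := by
    rw [← Real.rpow_add hx]; ring_nf
  linear_combination k * hxa

/-- Uniform-in-windows deviation bound. If a process `Λ` with
a.s. nondecreasing paths and `Λ(0) = 0` satisfies (DIFF) with exponent
`ζ > 0`, then for every `ε > 0` there are `C` and a threshold `a₀ ≥ 1`
such that for all `T ≥ 2` and all `a₀ ≤ a ≤ T`,
`P(∃ 0 ≤ s ≤ s' ≤ T with s' − s ≥ a and |Λ(s') − Λ(s) − (s'−s)| > (s'−s)^{1/2+ε})
  ≤ C · T² · a^{−ζ}`. -/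
theorem window_deviation_bound
    {Ω : Type*} [MeasurableSpace Ω] (P : Measure Ω) [IsProbabilityMeasure P]
    (ζ : ℝ) (hζ : 0 < ζ)
    (Λ : ℝ → Ω → ℝ)
    (hmono : ∀ᵐ ω ∂P, MonotoneOn (fun t => Λ t ω) (Set.Ici (0 : ℝ)))
    (hzero : ∀ᵐ ω ∂P, Λ 0 ω = 0)
    (hDIFF : ∀ ε : ℝ, 0 < ε → ∃ c : ℝ, ∀ a b : ℝ, 0 ≤ a → a ≤ b →
      P {ω | |Λ b ω - Λ a ω - (b - a)| > (b - a) ^ ((1 : ℝ) / 2 + ε)}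
        ≤ ENNReal.ofReal (c * (b - a) ^ (-ζ))) :
    ∀ ε : ℝ, 0 < ε → ∃ C : ℝ, ∃ a₀ : ℝ, 1 ≤ a₀ ∧
      ∀ T : ℝ, 2 ≤ T → ∀ a : ℝ, a₀ ≤ a → a ≤ T →
        P {ω | ∃ s s' : ℝ, 0 ≤ s ∧ s ≤ s' ∧ s' ≤ T ∧ a ≤ s' - s ∧
              |Λ s' ω - Λ s ω - (s' - s)| > (s' - s) ^ ((1 : ℝ) / 2 + ε)}
          ≤ ENNReal.ofReal (C * T ^ 2 * a ^ (-ζ)) := by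
  intro ε hε
  obtain ⟨c, hc⟩ := hDIFF (ε / 2) (by linarith)
  set α : ℝ := (1 : ℝ) / 2 + ε with hα
  set β : ℝ := (1 : ℝ) / 2 + ε / 2 with hβdef
  set k : ℝ := (1 / 2 : ℝ) ^ α with hkdef
  have hk : 0 < k := Real.rpow_pos_of_pos (by norm_num) α
  have hk1 : k ≤ 1 := Real.rpow_le_one (by norm_num) (by norm_num) (by rw [hα]; linarith)
  have hβ : 0 < β := by rw [hβdef]; linarith
  have hαβ : β < α := by rw [hα, hβdef]; linarith
  obtain ⟨t₀, ht₀⟩ := eventually_atTop.mp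
    ((aux_rpow_tendsto k α β hk hβ hαβ).eventually_ge_atTop 2)
  refine ⟨4 * (2 : ℝ) ^ ζ * max c 0, max (t₀ + 2) 4, le_trans (by norm_num) (le_max_right _ _),
    ?_⟩
  intro T hT a ha₀ haT
  have ha4 : (4 : ℝ) ≤ a := le_trans (le_max_right _ _) ha₀
  have hat : t₀ + 2 ≤ a := le_trans (le_max_left _ _) ha₀
  have hT0 : (0 : ℝ) ≤ T := by linarith
  set N : ℕ := ⌊T⌋₊ with hN
  set F : Finset (ℕ × ℕ) := Finset.range (N + 2) ×ˢ Finset.range (N + 2) with hF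
  set B : ℕ × ℕ → Set Ω := fun pq =>
    {ω | a - 2 ≤ ((pq.2 : ℝ) - (pq.1 : ℝ)) ∧
      |Λ (pq.2 : ℝ) ω - Λ (pq.1 : ℝ) ω - ((pq.2 : ℝ) - (pq.1 : ℝ))| >
        ((pq.2 : ℝ) - (pq.1 : ℝ)) ^ β} with hB
  -- Step 1: inclusion into the union of grid events (up to the non-monotone null set)
  have hsub : {ω | ∃ s s' : ℝ, 0 ≤ s ∧ s ≤ s' ∧ s' ≤ T ∧ a ≤ s' - s ∧
        |Λ s' ω - Λ s ω - (s' - s)| > (s' - s) ^ α} ⊆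
      (⋃ pq ∈ F, B pq) ∪ {ω | ¬ MonotoneOn (fun t => Λ t ω) (Set.Ici (0 : ℝ))} := by
    intro ω hω
    by_cases hG : MonotoneOn (fun t => Λ t ω) (Set.Ici (0 : ℝ))
    · left
      obtain ⟨s, s', hs0, hss', hsT, had, hdev⟩ := hω
      have hs'0 : 0 ≤ s' := hs0.trans hss'
      set i : ℕ := ⌊s⌋₊ with hi
      set j : ℕ := ⌊s'⌋₊ with hj
      have hi1 : (i : ℝ) ≤ s := Nat.floor_le hs0
      have hi2 : s < (i : ℝ) + 1 := by exact_mod_cast Nat.lt_floor_add_one s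
      have hj1 : (j : ℝ) ≤ s' := Nat.floor_le hs'0
      have hj2 : s' < (j : ℝ) + 1 := by exact_mod_cast Nat.lt_floor_add_one s'
      have hiN : i ≤ N := Nat.floor_le_floor (hss'.trans hsT)
      have hjN : j ≤ N := Nat.floor_le_floor hsT
      set d : ℝ := s' - s with hd
      have hda : a ≤ d := had
      rcases lt_abs.mp hdev with h | h
      · -- upper deviation: use pair (i, j+1)
        refine Set.mem_biUnion (show (i, j + 1) ∈ F by
          simp only [hF, Finset.mem_product, Finset.mem_range]; omega) ?_
        set L : ℝ := ((j + 1 : ℕ) : ℝ) - (i : ℝ) with hL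
        have hLcast : L = (j : ℝ) + 1 - (i : ℝ) := by push_cast [hL]; ring
        have hL1 : d ≤ L := by rw [hLcast, hd]; linarith
        have hL2 : L ≤ d + 2 := by rw [hLcast, hd]; linarith
        have hL0 : 0 < L := by linarith
        have hm1 : Λ s' ω ≤ Λ ((j + 1 : ℕ) : ℝ) ω := by
          have := hG (Set.mem_Ici.mpr hs'0)
            (Set.mem_Ici.mpr (by positivity : (0:ℝ) ≤ ((j + 1 : ℕ) : ℝ)))
            (by push_cast; linarith)
          exact this
        have hm2 : Λ (i : ℝ) ω ≤ Λ s ω :=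
          hG (Set.mem_Ici.mpr (by positivity)) (Set.mem_Ici.mpr hs0) hi1
        have hth : 2 ≤ k * L ^ α - L ^ β := ht₀ L (by linarith)
        have hd2 : L / 2 ≤ d := by linarith
        have hkL : k * L ^ α ≤ d ^ α := by
          have h1 : (L / 2) ^ α ≤ d ^ α :=
            Real.rpow_le_rpow (by positivity) hd2 (by rw [hα]; linarith)
          have h2 : k * L ^ α = (L / 2) ^ α := by
            rw [show L / 2 = (1 / 2 : ℝ) * L by ring,
              Real.mul_rpow (by norm_num) hL0.le, hkdef]
          linarith
        have hkey : L ^ β < Λ ((j + 1 : ℕ) : ℝ) ω - Λ (i : ℝ) ω - L := by linarith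
        refine ⟨by simpa [hL] using (by linarith : a - 2 ≤ L), ?_⟩
        exact lt_of_lt_of_le hkey (le_abs_self _)
      · -- lower deviation: use pair (i+1, j)
        refine Set.mem_biUnion (show (i + 1, j) ∈ F by
          simp only [hF, Finset.mem_product, Finset.mem_range]; omega) ?_
        set M : ℝ := (j : ℝ) - ((i + 1 : ℕ) : ℝ) with hM
        have hMcast : M = (j : ℝ) - ((i : ℝ) + 1) := by push_cast [hM]; ring
        have hM1 : d - 2 ≤ M := by rw [hMcast, hd]; linarith
        have hM2 : M ≤ d := by rw [hMcast, hd]; linarith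
        have hM0 : 0 < M := by linarith
        have hm1 : Λ (j : ℝ) ω ≤ Λ s' ω :=
          hG (Set.mem_Ici.mpr (by positivity)) (Set.mem_Ici.mpr hs'0) hj1
        have hm2 : Λ s ω ≤ Λ ((i + 1 : ℕ) : ℝ) ω := by
          have := hG (Set.mem_Ici.mpr hs0)
            (Set.mem_Ici.mpr (by positivity : (0:ℝ) ≤ ((i + 1 : ℕ) : ℝ)))
            (by push_cast; linarith)
          exact this
        have htd : 2 ≤ k * d ^ α - d ^ β := ht₀ d (by linarith)
        have hka : k * d ^ α ≤ d ^ α := by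
          have := mul_le_mul_of_nonneg_right hk1
            (Real.rpow_nonneg (by linarith : (0:ℝ) ≤ d) α)
          linarith
        have hMβ : M ^ β ≤ d ^ β :=
          Real.rpow_le_rpow hM0.le hM2 (by rw [hβdef]; linarith)
        have hkey : Λ (j : ℝ) ω - Λ ((i + 1 : ℕ) : ℝ) ω - M < -(M ^ β) := by linarith
        refine ⟨by simpa [hM] using (by linarith : a - 2 ≤ M), ?_⟩
        calc M ^ β < -(Λ (j : ℝ) ω - Λ ((i + 1 : ℕ) : ℝ) ω - M) := by linarith
          _ ≤ |Λ (j : ℝ) ω - Λ ((i + 1 : ℕ) : ℝ) ω - M| := neg_le_abs _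
    · right; exact hG
  -- Step 2: bound each grid event
  have hterm : ∀ pq ∈ F, P (B pq) ≤ ENNReal.ofReal (max c 0 * (a / 2) ^ (-ζ)) := by
    rintro ⟨p, q⟩ _
    by_cases hpq : a - 2 ≤ ((q : ℝ) - (p : ℝ))
    · have hple : (p : ℝ) ≤ (q : ℝ) := by linarith
      have hsub' : B (p, q) ⊆
          {ω | |Λ (q : ℝ) ω - Λ (p : ℝ) ω - ((q : ℝ) - (p : ℝ))| >
            ((q : ℝ) - (p : ℝ)) ^ ((1 : ℝ) / 2 + ε / 2)} := fun ω hω => hω.2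
      refine le_trans (le_trans (measure_mono hsub') (hc p q (by positivity) hple)) ?_
      apply ENNReal.ofReal_le_ofReal
      have hq0 : (0 : ℝ) < (q : ℝ) - (p : ℝ) := by linarith
      have h1 : ((q : ℝ) - (p : ℝ)) ^ (-ζ) ≤ (a / 2) ^ (-ζ) :=
        Real.rpow_le_rpow_of_nonpos (by linarith) (by linarith) (by linarith)
      have h2 : (0 : ℝ) ≤ ((q : ℝ) - (p : ℝ)) ^ (-ζ) := Real.rpow_nonneg hq0.le _
      calc c * ((q : ℝ) - (p : ℝ)) ^ (-ζ) ≤ max c 0 * ((q : ℝ) - (p : ℝ)) ^ (-ζ) :=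
            mul_le_mul_of_nonneg_right (le_max_left _ _) h2
        _ ≤ max c 0 * (a / 2) ^ (-ζ) :=
            mul_le_mul_of_nonneg_left h1 (le_max_right _ _)
    · have : B (p, q) = ∅ := by
        ext ω; simp only [hB, Set.mem_setOf_eq, Set.mem_empty_iff_false, iff_false]
        exact fun h => hpq h.1
      rw [this, measure_empty]; exact zero_le
  -- Step 3: put things together
  have hGc : P {ω | ¬ MonotoneOn (fun t => Λ t ω) (Set.Ici (0 : ℝ))} = 0 := ae_iff.mp hmono
  calc P {ω | ∃ s s' : ℝ, 0 ≤ s ∧ s ≤ s' ∧ s' ≤ T ∧ a ≤ s' - s ∧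
        |Λ s' ω - Λ s ω - (s' - s)| > (s' - s) ^ α}
      ≤ P ((⋃ pq ∈ F, B pq) ∪ {ω | ¬ MonotoneOn (fun t => Λ t ω) (Set.Ici (0 : ℝ))}) :=
        measure_mono hsub
    _ ≤ P (⋃ pq ∈ F, B pq) + P {ω | ¬ MonotoneOn (fun t => Λ t ω) (Set.Ici (0 : ℝ))} :=
        measure_union_le _ _
    _ = P (⋃ pq ∈ F, B pq) := by rw [hGc, add_zero]
    _ ≤ ∑ pq ∈ F, P (B pq) := measure_biUnion_finset_le F B
    _ ≤ ∑ _pq ∈ F, ENNReal.ofReal (max c 0 * (a / 2) ^ (-ζ)) := Finset.sum_le_sum hterm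
    _ = F.card * ENNReal.ofReal (max c 0 * (a / 2) ^ (-ζ)) := by
        rw [Finset.sum_const, nsmul_eq_mul]
    _ ≤ ENNReal.ofReal (4 * (2 : ℝ) ^ ζ * max c 0 * T ^ 2 * a ^ (-ζ)) := by
        rw [← ENNReal.ofReal_natCast F.card, ← ENNReal.ofReal_mul (Nat.cast_nonneg _)]
        apply ENNReal.ofReal_le_ofReal
        have hcard : (F.card : ℝ) = ((N : ℝ) + 2) * ((N : ℝ) + 2) := by
          rw [hF, Finset.card_product, Finset.card_range]; push_cast; ring
        have hNT : (N : ℝ) ≤ T := Nat.floor_le hT0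
        have hsq : ((N : ℝ) + 2) * ((N : ℝ) + 2) ≤ 4 * T ^ 2 := by nlinarith
        have ha0' : (0 : ℝ) < a := by linarith
        have hhalf : (a / 2) ^ (-ζ) = (2 : ℝ) ^ ζ * a ^ (-ζ) := by
          rw [Real.div_rpow ha0'.le (by norm_num : (0:ℝ) ≤ 2),
            Real.rpow_neg (by norm_num : (0:ℝ) ≤ 2) ζ, div_eq_mul_inv, inv_inv]
          ring
        rw [hcard, hhalf]
        have hrest : (0 : ℝ) ≤ max c 0 * ((2 : ℝ) ^ ζ * a ^ (-ζ)) := by positivity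
        calc ((N : ℝ) + 2) * ((N : ℝ) + 2) * (max c 0 * ((2 : ℝ) ^ ζ * a ^ (-ζ)))
            ≤ 4 * T ^ 2 * (max c 0 * ((2 : ℝ) ^ ζ * a ^ (-ζ))) :=
              mul_le_mul_of_nonneg_right hsq hrest
          _ = 4 * (2 : ℝ) ^ ζ * max c 0 * T ^ 2 * a ^ (-ζ) := by ring
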